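/- The sequence n ↦ δ_n is strictly increasing on the integers n ≥ 2, i.e. for all integers 2 ≤ m < n one has δ_m < δ_n. -/

import Mathlib

/-- `δ_n = (1/(4n))·∑_{l=1}^{n−1} 1/sin(πl/n) − 1`. -/
noncomputable def deltaN (n : ℕ) : ℝ :=
  (1 / (4 * (n : ℝ))) * ∑ l ∈ Finset.Icc 1 (n - 1), 1 / Real.sin (Real.pi * l / n) - 1

/-- `h_n(x,θ) = (1/n)·∑_{l=1}^{n} (1 − x·cos(2πl/n + θ))/(1 + x² − 2x·cos(2πl/n + θ))^{3/2}`. -/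
noncomputable def hN (n : ℕ) (x θ : ℝ) : ℝ :=
  (1 / (n : ℝ)) * ∑ l ∈ Finset.Icc 1 n,
    (1 - x * Real.cos (2 * Real.pi * l / n + θ)) /
      (1 + x ^ 2 - 2 * x * Real.cos (2 * Real.pi * l / n + θ)) ^ ((3 : ℝ) / 2)

/-- `k_n(x,θ) = h_n(x,θ) − 1`. -/
noncomputable def kN (n : ℕ) (x θ : ℝ) : ℝ := hN n x θ - 1

open Real Finset

/-- positivity of sin at interior grid points -/
lemma sin_grid_pos {n l : ℕ} (hl : 1 ≤ l) (hln : l ≤ n - 1) (hn : 2 ≤ n) :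
    0 < Real.sin (Real.pi * l / n) := by
  have hn0 : (0 : ℝ) < n := by positivity
  apply Real.sin_pos_of_pos_of_lt_pi
  · have : (0 : ℝ) < l := by exact_mod_cast hl
    positivity
  · have hlt : (l : ℝ) < n := by
      have hlt' : l < n := by omega
      exact_mod_cast hlt'
    rw [div_lt_iff₀ hn0]
    nlinarith [Real.pi_pos]

set_option maxHeartbeats 1000000 in
/-- key pointwise convexity inequality -/
lemma key_pointwise {n l : ℕ} (hn : 2 ≤ n) (hl : 1 ≤ l) (hln : l ≤ n - 1) :
    (n : ℝ) * (1 / Real.sin (Real.pi * l / n)) ≤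
      ((n : ℝ) - l) * (1 / Real.sin (Real.pi * l / (n + 1))) +
      (l : ℝ) * (1 / Real.sin (Real.pi * (l + 1) / (n + 1))) := by
  have hn0 : (0 : ℝ) < n := by positivity
  have hl0 : (0 : ℝ) < l := by exact_mod_cast hl
  have hlen : (l : ℝ) ≤ n - 1 := by
    have : (l : ℝ) ≤ ((n - 1 : ℕ) : ℝ) := by exact_mod_cast hln
    rwa [Nat.cast_sub (by omega), Nat.cast_one] at this
  have hpi := Real.pi_pos
  -- points in Icc 0 π
  have hxmem : Real.pi * l / (n + 1) ∈ Set.Icc 0 Real.pi := by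
    constructor
    · positivity
    · rw [div_le_iff₀ (by positivity)]; nlinarith
  have hymem : Real.pi * (l + 1) / (n + 1) ∈ Set.Icc 0 Real.pi := by
    constructor
    · positivity
    · rw [div_le_iff₀ (by positivity)]; nlinarith
  have hA : 0 < Real.sin (Real.pi * l / (n + 1)) := by
    have := sin_grid_pos (n := n + 1) (l := l) hl (by omega) (by omega)
    simpa [Nat.cast_add, Nat.cast_one] using this
  have hB : 0 < Real.sin (Real.pi * (l + 1) / (n + 1)) := by
    have := sin_grid_pos (n := n + 1) (l := l + 1) (by omega) (by omega) (by omega)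
    simpa [Nat.cast_add, Nat.cast_one] using this
  have hC : 0 < Real.sin (Real.pi * l / n) := sin_grid_pos hl hln hn
  -- concavity of sin
  have ha : (0:ℝ) ≤ ((n : ℝ) - (l : ℝ)) / (n : ℝ) := div_nonneg (by linarith) hn0.le
  have hb : (0:ℝ) ≤ (l : ℝ) / (n : ℝ) := by positivity
  have hab : ((n : ℝ) - (l : ℝ)) / (n : ℝ) + (l : ℝ) / (n : ℝ) = 1 := by field_simp; ring
  have hconc := strictConcaveOn_sin_Icc.concaveOn.2 hxmem hymem ha hb hab
  simp only [smul_eq_mul] at hconc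
  have harg : ((n : ℝ) - l) / n * (Real.pi * l / (n + 1)) +
      (l : ℝ) / n * (Real.pi * (l + 1) / (n + 1)) = Real.pi * l / n := by
    field_simp
    ring
  rw [harg] at hconc
  set A := Real.sin (Real.pi * l / (n + 1))
  set B := Real.sin (Real.pi * (l + 1) / (n + 1))
  set C := Real.sin (Real.pi * l / n)
  have hln' : (l : ℝ) ≤ (n : ℝ) := by linarith
  have hform : ((n:ℝ) - l) / n * A + (l:ℝ) / n * B = (((n:ℝ) - l) * A + l * B) / n := by
    ring
  rw [hform] at hconc
  have hDC : ((n:ℝ) - l) * A + (l:ℝ) * B ≤ C * n := (div_le_iff₀ hn0).1 hconc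
  have hkey : (n:ℝ) ^ 2 * A * B ≤ (((n:ℝ) - l) * B + l * A) * (((n:ℝ) - l) * A + l * B) := by
    nlinarith [mul_nonneg (mul_nonneg hl0.le (sub_nonneg.2 hln')) (sq_nonneg (A - B))]
  have hcoef : (0:ℝ) ≤ ((n:ℝ) - l) * B + l * A := by nlinarith
  have h3 : (n:ℝ) ^ 2 * A * B ≤ (((n:ℝ) - l) * B + l * A) * (C * n) :=
    hkey.trans (mul_le_mul_of_nonneg_left hDC hcoef)
  have final : (n:ℝ) * A * B ≤ (((n:ℝ) - l) * B + l * A) * C := by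
    apply le_of_mul_le_mul_right _ hn0
    calc (n:ℝ) * A * B * n = (n:ℝ) ^ 2 * A * B := by ring
      _ ≤ (((n:ℝ) - l) * B + l * A) * (C * n) := h3
      _ = (((n:ℝ) - l) * B + l * A) * C * n := by ring
  have hdiv : (n:ℝ) / C ≤ (((n:ℝ) - l) * B + l * A) / (A * B) := by
    rw [div_le_div_iff₀ hC (mul_pos hA hB)]
    calc (n:ℝ) * (A * B) = (n:ℝ) * A * B := by ring
      _ ≤ (((n:ℝ) - l) * B + l * A) * C := final
  have hrw : (n:ℝ) * (1 / C) = (n:ℝ) / C := by ring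
  rw [hrw]
  refine hdiv.trans_eq ?_
  field_simp

lemma sum_pos_aux {n : ℕ} (hn : 2 ≤ n) :
    0 < ∑ l ∈ Finset.Icc 1 (n - 1), 1 / Real.sin (Real.pi * l / n) := by
  apply Finset.sum_pos
  · intro l hl
    rw [Finset.mem_Icc] at hl
    have := sin_grid_pos hl.1 hl.2 hn
    positivity
  · exact ⟨1, by rw [Finset.mem_Icc]; omega⟩

lemma key_sum {n : ℕ} (hn : 2 ≤ n) :
    (n : ℝ) * ∑ l ∈ Finset.Icc 1 (n - 1), 1 / Real.sin (Real.pi * l / n) ≤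
      ((n : ℝ) - 1) * ∑ l ∈ Finset.Icc 1 n, 1 / Real.sin (Real.pi * l / (n + 1)) := by
  rw [Finset.mul_sum]
  calc ∑ l ∈ Finset.Icc 1 (n - 1), (n : ℝ) * (1 / Real.sin (Real.pi * l / n))
      ≤ ∑ l ∈ Finset.Icc 1 (n - 1),
          (((n : ℝ) - l) * (1 / Real.sin (Real.pi * l / (n + 1))) +
            (l : ℝ) * (1 / Real.sin (Real.pi * (l + 1) / (n + 1)))) := by
        apply Finset.sum_le_sum
        intro l hl
        rw [Finset.mem_Icc] at hl
        exact key_pointwise hn hl.1 hl.2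
    _ = ((n : ℝ) - 1) * ∑ l ∈ Finset.Icc 1 n, 1 / Real.sin (Real.pi * l / (n + 1)) := by
        rw [Finset.sum_add_distrib]
        have h2 : ∑ l ∈ Finset.Icc 1 (n - 1),
            (l : ℝ) * (1 / Real.sin (Real.pi * (l + 1) / (n + 1))) =
            ∑ l ∈ Finset.Icc 2 n, ((l : ℝ) - 1) * (1 / Real.sin (Real.pi * l / (n + 1))) := by
          apply Finset.sum_nbij' (fun l => l + 1) (fun l => l - 1)
          · intro a ha; rw [Finset.mem_Icc] at *; omega
          · intro a ha; rw [Finset.mem_Icc] at *; omega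
          · intro a ha; rw [Finset.mem_Icc] at ha; omega
          · intro a ha; rw [Finset.mem_Icc] at ha; omega
          · intro a ha
            rw [Finset.mem_Icc] at ha
            push_cast
            ring_nf
        rw [h2]
        have hsplit : Finset.Icc 1 n = insert 1 (Finset.Icc 2 n) := by
          ext a; simp only [Finset.mem_insert, Finset.mem_Icc]; omega
        have hsplit2 : Finset.Icc 1 n = insert n (Finset.Icc 1 (n - 1)) := by
          ext a; simp only [Finset.mem_insert, Finset.mem_Icc]; omega
        have e1 : ∑ l ∈ Finset.Icc 1 (n - 1),
            ((n : ℝ) - l) * (1 / Real.sin (Real.pi * l / (n + 1))) =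
            ∑ l ∈ Finset.Icc 1 n, ((n : ℝ) - l) * (1 / Real.sin (Real.pi * l / (n + 1))) := by
          rw [hsplit2, Finset.sum_insert (by rw [Finset.mem_Icc]; omega)]
          simp
        have e2 : ∑ l ∈ Finset.Icc 2 n,
            ((l : ℝ) - 1) * (1 / Real.sin (Real.pi * l / (n + 1))) =
            ∑ l ∈ Finset.Icc 1 n, ((l : ℝ) - 1) * (1 / Real.sin (Real.pi * l / (n + 1))) := by
          rw [hsplit, Finset.sum_insert (by rw [Finset.mem_Icc]; omega)]
          simp
        rw [e1, e2, ← Finset.sum_add_distrib, Finset.mul_sum]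
        apply Finset.sum_congr rfl
        intro l _
        ring

lemma deltaN_step {n : ℕ} (hn : 2 ≤ n) : deltaN n < deltaN (n + 1) := by
  unfold deltaN
  have hn0 : (0 : ℝ) < n := by positivity
  have hs : (n + 1 : ℕ) - 1 = n := by omega
  rw [hs]
  have hcast : ((n + 1 : ℕ) : ℝ) = (n : ℝ) + 1 := by push_cast; ring
  set Sn := ∑ l ∈ Finset.Icc 1 (n - 1), 1 / Real.sin (Real.pi * l / n) with hSn
  rw [hcast]
  set Sn1 := ∑ l ∈ Finset.Icc 1 n, 1 / Real.sin (Real.pi * l / ((n : ℝ) + 1)) with hS1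
  have hkey : (n : ℝ) * Sn ≤ ((n : ℝ) - 1) * Sn1 := key_sum hn
  have hpos : 0 < Sn1 := by
    have := sum_pos_aux (n := n + 1) (by omega)
    have hs2 : (n + 1) - 1 = n := by omega
    rw [hs2] at this
    push_cast at this
    exact this
  have hn2 : (2 : ℝ) ≤ n := by exact_mod_cast hn
  have goal : (1 / (4 * (n : ℝ))) * Sn < (1 / (4 * ((n : ℝ) + 1))) * Sn1 := by
    rw [div_mul_eq_mul_div, div_mul_eq_mul_div, one_mul, one_mul,
      div_lt_div_iff₀ (by positivity) (by positivity)]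
    nlinarith
  linarith

/-- The sequence `n ↦ δ_n` is strictly increasing on the integers `n ≥ 2`. -/
theorem deltaN_strictMono : ∀ m n : ℕ, 2 ≤ m → m < n → deltaN m < deltaN n := by
  intro m n hm hmn
  induction n, hmn using Nat.le_induction with
  | base => exact deltaN_step hm
  | succ n hn ih => exact ih.trans (deltaN_step (by omega))
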